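/- arXiv:1107.4619 — 3 statements merged into one kernel-verified Lean document; each statement's English description precedes it below -/
import Mathlib

section
/- Let f : ℝ → ℝ be differentiable such that f and x·f(x) are integrable and f' and (x·f(x))' are bounded. Then for every x, the Hilbert transform Hf(x) = (1/π) lim_{ε→0} ∫_{|t|>ε} f(x−t)/t dt exists, and there is a constant C (depending only on ‖f‖₁, ‖f'‖_∞, ‖xf‖₁, ‖(xf)'‖_∞) such that |Hf(x)| ≤ C/(1+|x|) for all x ∈ ℝ. -/
open MeasureTheory Filter Real Set

lemma hilbertAux_measSet (ε : ℝ) : MeasurableSet {t : ℝ | ε < |t|} :=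
  (isOpen_lt continuous_const continuous_abs).measurableSet

lemma hilbertAux_tail (φ : ℝ → ℝ) (hc : Continuous φ) (hφ : Integrable φ)
    (x : ℝ) {ε : ℝ} (hε : 0 < ε) :
    IntegrableOn (fun t => φ (x - t) / t) {t : ℝ | ε < |t|} := by
  have hmeas : AEStronglyMeasurable (fun t => φ (x - t) / t)
      (volume.restrict {t : ℝ | ε < |t|}) :=
    (((hc.comp (continuous_const.sub continuous_id)).measurable).div
      measurable_id).aestronglyMeasurable
  have hint : IntegrableOn (fun t => ε⁻¹ * |φ (x - t)|) {t : ℝ | ε < |t|} :=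
    (((hφ.comp_sub_left x).abs).const_mul _).integrableOn
  refine hint.mono' hmeas ?_
  filter_upwards [ae_restrict_mem (hilbertAux_measSet ε)] with t ht
  have h1 : ε < |t| := ht
  rw [Real.norm_eq_abs, abs_div]
  calc |φ (x - t)| / |t| ≤ |φ (x - t)| / ε :=
        div_le_div_of_nonneg_left (abs_nonneg _) hε h1.le
    _ = ε⁻¹ * |φ (x - t)| := by rw [div_eq_inv_mul]

lemma hilbertAux_odd {ε : ℝ} (hε : 0 < ε) (hε1 : ε ≤ 1) :
    ∫ t in {t : ℝ | ε < |t|} ∩ Icc (-1 : ℝ) 1, t⁻¹ = 0 := by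
  have hset : {t : ℝ | ε < |t|} ∩ Icc (-1 : ℝ) 1 = Ico (-1 : ℝ) (-ε) ∪ Ioc ε 1 := by
    ext t
    simp only [mem_inter_iff, mem_setOf_eq, mem_Icc, mem_union, mem_Ico, mem_Ioc, lt_abs]
    constructor
    · rintro ⟨h1 | h1, h2, h3⟩
      · exact Or.inr ⟨h1, h3⟩
      · exact Or.inl ⟨h2, by linarith⟩
    · rintro (⟨h1, h2⟩ | ⟨h1, h2⟩)
      · exact ⟨Or.inr (by linarith), h1, by linarith⟩
      · exact ⟨Or.inl h1, by linarith, h2⟩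
  have hi1 : IntervalIntegrable (fun t : ℝ => t⁻¹) volume (-1) (-ε) := by
    apply intervalIntegral.intervalIntegrable_inv (f := fun t : ℝ => t)
      (μ := volume) ?_ continuousOn_id
    intro y hy
    rw [uIcc_of_le (by linarith : (-1:ℝ) ≤ -ε)] at hy
    intro h; subst h
    have := hy.2; linarith
  have hi2 : IntervalIntegrable (fun t : ℝ => t⁻¹) volume ε 1 := by
    apply intervalIntegral.intervalIntegrable_inv (f := fun t : ℝ => t)
      (μ := volume) ?_ continuousOn_id
    intro y hy
    rw [uIcc_of_le hε1] at hy
    intro h; subst h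
    have := hy.1; linarith
  have hInt1 : IntegrableOn (fun t : ℝ => t⁻¹) (Ico (-1 : ℝ) (-ε)) := by
    rw [integrableOn_Ico_iff_integrableOn_Ioo]
    exact Iff.mp integrableOn_Ioc_iff_integrableOn_Ioo hi1.1
  have hInt2 : IntegrableOn (fun t : ℝ => t⁻¹) (Ioc ε 1) := hi2.1
  have hdisj : Disjoint (Ico (-1 : ℝ) (-ε)) (Ioc ε 1) := by
    rw [Set.disjoint_left]
    intro a ha hb
    have := ha.2; have := hb.1; linarith
  rw [hset, setIntegral_union hdisj measurableSet_Ioc hInt1 hInt2]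
  have e1 : ∫ t in Ico (-1 : ℝ) (-ε), t⁻¹ = Real.log ε := by
    rw [integral_Ico_eq_integral_Ioo, ← integral_Ioc_eq_integral_Ioo,
      ← intervalIntegral.integral_of_le (by linarith : (-1:ℝ) ≤ -ε)]
    rw [integral_inv (by
      rw [uIcc_of_le (by linarith : (-1:ℝ) ≤ -ε)]
      intro h; have := h.2; linarith)]
    norm_num
  have e2 : ∫ t in Ioc ε 1, t⁻¹ = - Real.log ε := by
    rw [← intervalIntegral.integral_of_le hε1]
    rw [integral_inv_of_pos hε zero_lt_one]
    rw [one_div, Real.log_inv]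
  rw [e1, e2]; ring

lemma hilbertAux_key (φ : ℝ → ℝ) (hc : Continuous φ) (hφ : Integrable φ) (K : ℝ)
    (hK0 : 0 ≤ K) (hK : ∀ a b : ℝ, |φ a - φ b| ≤ K * |a - b|) (x : ℝ) :
    ∃ L : ℝ, Tendsto (fun ε : ℝ => ∫ t in {t : ℝ | ε < |t|}, φ (x - t) / t)
      (nhdsWithin 0 (Ioi 0)) (nhds L) ∧ |L| ≤ 2 * K + ∫ t, |φ t| := by
  set h : ℝ → ℝ := fun t => (φ (x - t) - φ x) / t with hh
  have hbound : ∀ t, |h t| ≤ K := by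
    intro t
    rcases eq_or_ne t 0 with rfl | ht
    · simpa [hh] using hK0
    · rw [hh]
      simp only
      rw [abs_div, div_le_iff₀ (abs_pos.2 ht)]
      calc |φ (x - t) - φ x| ≤ K * |x - t - x| := hK _ _
        _ = K * |t| := by rw [show x - t - x = -t by ring, abs_neg]
  have hmeash : Measurable h :=
    (((hc.comp (continuous_const.sub continuous_id)).sub continuous_const).measurable).div
      measurable_id
  have hIcc : IntegrableOn h (Icc (-1 : ℝ) 1) := by
    refine Integrable.mono' (g := fun _ => K)
      (integrableOn_const (ne_of_lt measure_Icc_lt_top))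
      hmeash.aestronglyMeasurable ?_
    exact ae_of_all _ fun t => by rw [Real.norm_eq_abs]; exact hbound t
  set L1 := ∫ t in Icc (-1 : ℝ) 1, h t with hL1
  set L2 := ∫ t in {t : ℝ | 1 < |t|}, φ (x - t) / t with hL2
  have key : ∀ ε : ℝ, 0 < ε → ε ≤ 1 →
      (∫ t in {t : ℝ | ε < |t|}, φ (x - t) / t) - (L1 + L2) = -∫ t in Icc (-ε) ε, h t := by
    intro ε hε hε1
    set S : Set ℝ := {t : ℝ | ε < |t|} ∩ Icc (-1 : ℝ) 1 with hS
    have hSmeas : MeasurableSet S := (hilbertAux_measSet ε).inter measurableSet_Icc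
    have hSsub : S ⊆ {t : ℝ | ε < |t|} := inter_subset_left
    have hsplit : {t : ℝ | ε < |t|} = S ∪ {t : ℝ | 1 < |t|} := by
      ext t
      simp only [hS, mem_union, mem_inter_iff, mem_setOf_eq, mem_Icc]
      constructor
      · intro h1
        rcases le_or_gt (|t|) 1 with h2 | h2
        · exact Or.inl ⟨h1, (abs_le.1 h2).1, (abs_le.1 h2).2⟩
        · exact Or.inr h2
      · rintro (⟨h1, _⟩ | h1)
        · exact h1
        · exact lt_of_le_of_lt hε1 h1
    have hdisj : Disjoint S {t : ℝ | 1 < |t|} := by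
      rw [Set.disjoint_left]
      rintro a ⟨_, ha2⟩ hb
      rw [mem_setOf_eq] at hb
      rw [mem_Icc] at ha2
      rcases abs_cases a with ⟨e, _⟩ | ⟨e, _⟩ <;> rw [e] at hb <;> linarith [ha2.1, ha2.2]
    have hIS : IntegrableOn (fun t => φ (x - t) / t) S :=
      (hilbertAux_tail φ hc hφ x hε).mono_set hSsub
    have hItail : IntegrableOn (fun t => φ (x - t) / t) {t : ℝ | 1 < |t|} :=
      hilbertAux_tail φ hc hφ x zero_lt_one
    have hIhS : IntegrableOn h S := hIcc.mono_set inter_subset_right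
    have hIinvS : IntegrableOn (fun t : ℝ => φ x * t⁻¹) S := by
      refine Integrable.const_mul ?_ _
      refine Integrable.mono' (g := fun _ => ε⁻¹) (integrableOn_const (ne_of_lt
        (lt_of_le_of_lt (measure_mono (inter_subset_right (s := {t : ℝ | ε < |t|})))
          measure_Icc_lt_top)))
        (measurable_inv.aestronglyMeasurable) ?_
      filter_upwards [ae_restrict_mem hSmeas] with t ht
      have h1 : ε < |t| := ht.1
      rw [Real.norm_eq_abs, abs_inv]
      exact inv_anti₀ hε h1.le
    -- step 1 : split tail
    have e1 : (∫ t in {t : ℝ | ε < |t|}, φ (x - t) / t)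
        = (∫ t in S, φ (x - t) / t) + L2 := by
      rw [hsplit, setIntegral_union hdisj (hilbertAux_measSet 1) hIS hItail]
    -- step 2 : on S, decompose
    have e2 : (∫ t in S, φ (x - t) / t) = ∫ t in S, h t := by
      have heq : EqOn (fun t => φ (x - t) / t) (fun t => h t + φ x * t⁻¹) S := by
        intro t ht
        have h1 : ε < |t| := ht.1
        have ht0 : t ≠ 0 := by
          intro h0; rw [h0, abs_zero] at h1; linarith
        simp only [hh]
        field_simp
        ring
      rw [setIntegral_congr_fun hSmeas heq,
        integral_add hIhS hIinvS, integral_const_mul, hilbertAux_odd hε hε1, mul_zero, add_zero]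
    -- step 3 : L1 split
    have e3 : L1 = (∫ t in S, h t) + ∫ t in Icc (-ε) ε, h t := by
      have hsplit2 : Icc (-1 : ℝ) 1 = S ∪ Icc (-ε) ε := by
        ext t
        simp only [hS, mem_union, mem_inter_iff, mem_setOf_eq, mem_Icc]
        constructor
        · intro ht
          rcases le_or_gt (|t|) ε with h2 | h2
          · exact Or.inr ⟨(abs_le.1 h2).1, (abs_le.1 h2).2⟩
          · exact Or.inl ⟨h2, ht⟩
        · rintro (⟨_, h2⟩ | h2)
          · exact h2
          · constructor <;> linarith [h2.1, h2.2]
      have hdisj2 : Disjoint S (Icc (-ε) ε) := by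
        rw [Set.disjoint_left]
        rintro a ⟨ha1, _⟩ hb
        rw [mem_Icc] at hb
        rw [mem_setOf_eq] at ha1
        rcases abs_cases a with ⟨e, _⟩ | ⟨e, _⟩ <;> rw [e] at ha1 <;> linarith [hb.1, hb.2]
      rw [hL1, hsplit2, setIntegral_union hdisj2 measurableSet_Icc hIhS
        (hIcc.mono_set (by
          intro t ht
          rw [mem_Icc] at *
          constructor <;> linarith [ht.1, ht.2]))]
    rw [e1, e2, e3]; ring
  refine ⟨L1 + L2, ?_, ?_⟩
  · have hev : ∀ᶠ ε in nhdsWithin (0:ℝ) (Ioi 0),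
        ‖(∫ t in {t : ℝ | ε < |t|}, φ (x - t) / t) - (L1 + L2)‖ ≤ K * (2 * ε) := by
      filter_upwards [Ioc_mem_nhdsGT_of_mem (⟨le_refl (0:ℝ), zero_lt_one⟩ : (0:ℝ) ∈ Ico (0:ℝ) 1)]
        with ε hε
      rw [key ε hε.1 hε.2, norm_neg]
      have hb := norm_setIntegral_le_of_norm_le_const (μ := volume) (s := Icc (-ε) ε)
        (C := K) measure_Icc_lt_top (fun t _ => by rw [Real.norm_eq_abs]; exact hbound t)
      · calc ‖∫ t in Icc (-ε) ε, h t‖ ≤ K * (volume (Icc (-ε) ε)).toReal := hb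
          _ = K * (2 * ε) := by
            rw [Real.volume_Icc, ENNReal.toReal_ofReal (by linarith [hε.1.le] : (0:ℝ) ≤ ε - -ε)]
            ring
    have h0 : Tendsto (fun ε : ℝ => K * (2 * ε)) (nhdsWithin (0:ℝ) (Ioi 0)) (nhds 0) := by
      have : Tendsto (fun ε : ℝ => K * (2 * ε)) (nhds 0) (nhds (K * (2 * 0))) :=
        (continuous_const.mul (continuous_const.mul continuous_id)).tendsto 0
      rw [mul_zero, mul_zero] at this
      exact this.mono_left nhdsWithin_le_nhds
    have := squeeze_zero_norm' hev h0
    have h2 := this.add_const (L1 + L2)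
    simpa using h2
  · have hb1 : |L1| ≤ K * 2 := by
      have := norm_setIntegral_le_of_norm_le_const (μ := volume) (s := Icc (-1:ℝ) 1)
        (C := K) measure_Icc_lt_top (fun t _ => by rw [Real.norm_eq_abs]; exact hbound t)
      rw [Real.volume_real_Icc] at this
      norm_num at this
      simpa [hL1] using this
    have hb2 : |L2| ≤ ∫ t, |φ t| := by
      have s1 : |L2| ≤ ∫ t in {t : ℝ | 1 < |t|}, |φ (x - t) / t| := by
        have := norm_integral_le_integral_norm (μ := volume.restrict {t : ℝ | 1 < |t|})
            (fun t => φ (x - t) / t)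
        simpa only [Real.norm_eq_abs] using this
      have s2 : (∫ t in {t : ℝ | 1 < |t|}, |φ (x - t) / t|)
          ≤ ∫ t in {t : ℝ | 1 < |t|}, |φ (x - t)| := by
        refine setIntegral_mono_on (hilbertAux_tail φ hc hφ x zero_lt_one).abs
          ((hφ.comp_sub_left x).abs.integrableOn) (hilbertAux_measSet 1) ?_
        intro t ht
        rw [mem_setOf_eq] at ht
        rw [abs_div]
        exact div_le_self (abs_nonneg _) ht.le
      have s3 : (∫ t in {t : ℝ | 1 < |t|}, |φ (x - t)|) ≤ ∫ t, |φ (x - t)| :=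
        setIntegral_le_integral ((hφ.comp_sub_left x).abs) (ae_of_all _ fun t => abs_nonneg _)
      have s4 : (∫ t, |φ (x - t)|) = ∫ t, |φ t| :=
        integral_sub_left_eq_self (fun t => |φ t|) volume x
      linarith
    calc |L1 + L2| ≤ |L1| + |L2| := abs_add_le _ _
      _ ≤ 2 * K + ∫ t, |φ t| := by linarith

lemma hilbertAux_lip (φ : ℝ → ℝ) (h : Differentiable ℝ φ) (K : ℝ) (hK0 : 0 ≤ K)
    (hb : ∀ x, |deriv φ x| ≤ K) : ∀ a b : ℝ, |φ a - φ b| ≤ K * |a - b| := by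
  have hl : LipschitzWith K.toNNReal φ := by
    refine lipschitzWith_of_nnnorm_deriv_le h fun x => ?_
    rw [← NNReal.coe_le_coe, coe_nnnorm, Real.coe_toNNReal _ hK0, Real.norm_eq_abs]
    exact hb x
  intro a b
  have h2 := hl.dist_le_mul a b
  rw [Real.dist_eq, Real.dist_eq, Real.coe_toNNReal _ hK0] at h2
  exact h2

/-- **classical result.** If `f` is differentiable with `f` and `x·f(x)`
integrable and `f'`, `(x·f(x))'` bounded, then the principal-value Hilbert transform
`Hf(x) = (1/π) lim_{ε→0⁺} ∫_{|t|>ε} f(x−t)/t dt` exists at every `x` and satisfies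
`|Hf(x)| ≤ C/(1+|x|)` for some constant `C`. -/
theorem hilbert_transform_decay (f : ℝ → ℝ) (hdiff : Differentiable ℝ f)
    (hint : Integrable f) (M : ℝ) (hM : ∀ x, |deriv f x| ≤ M)
    (hgint : Integrable (fun x => x * f x)) (M' : ℝ)
    (hM' : ∀ x, |deriv (fun x => x * f x) x| ≤ M') :
    ∃ Hf : ℝ → ℝ,
      (∀ x : ℝ, Tendsto (fun ε : ℝ => (1 / π) * ∫ t in {t : ℝ | ε < |t|}, f (x - t) / t)
        (nhdsWithin 0 (Ioi 0)) (nhds (Hf x))) ∧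
      ∃ C : ℝ, 0 < C ∧ ∀ x : ℝ, |Hf x| ≤ C / (1 + |x|) := by
  set g : ℝ → ℝ := fun x => x * f x with hg
  have hM0 : 0 ≤ M := le_trans (abs_nonneg _) (hM 0)
  have hM'0 : 0 ≤ M' := le_trans (abs_nonneg _) (hM' 0)
  have hgdiff : Differentiable ℝ g := differentiable_id.mul hdiff
  have hKf : ∀ a b : ℝ, |f a - f b| ≤ M * |a - b| := hilbertAux_lip f hdiff M hM0 hM
  have hKg : ∀ a b : ℝ, |g a - g b| ≤ M' * |a - b| := hilbertAux_lip g hgdiff M' hM'0 hM'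
  choose Lf hLf1 hLf2 using fun x => hilbertAux_key f hdiff.continuous hint M hM0 hKf x
  choose Lg hLg1 hLg2 using fun x => hilbertAux_key g hgdiff.continuous hgint M' hM'0 hKg x
  set If := ∫ t, |f t| with hIf
  set Ig := ∫ t, |g t| with hIg
  have hIf0 : 0 ≤ If := integral_nonneg fun t => abs_nonneg _
  have hIg0 : 0 ≤ Ig := integral_nonneg fun t => abs_nonneg _
  -- the key inequality for the decay
  have hxL : ∀ x : ℝ, |x * Lf x| ≤ |Lg x| + If := by
    intro x
    have hident : ∀ᶠ ε in nhdsWithin (0:ℝ) (Ioi 0),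
        |x * ∫ t in {t : ℝ | ε < |t|}, f (x - t) / t|
          ≤ |∫ t in {t : ℝ | ε < |t|}, g (x - t) / t| + If := by
      filter_upwards [self_mem_nhdsWithin] with ε hε
      rw [mem_Ioi] at hε
      set A : Set ℝ := {t : ℝ | ε < |t|} with hA
      have hAmeas : MeasurableSet A := hilbertAux_measSet ε
      have hgA : IntegrableOn (fun t => g (x - t) / t) A :=
        hilbertAux_tail g hgdiff.continuous hgint x hε
      have hfA : IntegrableOn (fun t => f (x - t)) A := (hint.comp_sub_left x).integrableOn
      have heq : x * ∫ t in A, f (x - t) / t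
          = (∫ t in A, g (x - t) / t) + ∫ t in A, f (x - t) := by
        rw [← integral_const_mul, ← integral_add hgA hfA]
        refine setIntegral_congr_fun hAmeas ?_
        intro t ht
        have h1 : ε < |t| := ht
        have ht0 : t ≠ 0 := by intro h0; rw [h0, abs_zero] at h1; linarith
        simp only [hg]
        field_simp
        ring
      rw [heq]
      have hb : |∫ t in A, f (x - t)| ≤ If := by
        have n1 : |∫ t in A, f (x - t)| ≤ ∫ t in A, |f (x - t)| := by
          have := norm_integral_le_integral_norm (μ := volume.restrict A)
            (fun t => f (x - t))
          simpa only [Real.norm_eq_abs] using this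
        have n2 : (∫ t in A, |f (x - t)|) ≤ ∫ t, |f (x - t)| :=
          setIntegral_le_integral ((hint.comp_sub_left x).abs)
            (ae_of_all _ fun t => abs_nonneg _)
        have n3 : (∫ t, |f (x - t)|) = If :=
          integral_sub_left_eq_self (fun t => |f t|) volume x
        linarith
      calc |(∫ t in A, g (x - t) / t) + ∫ t in A, f (x - t)|
          ≤ |∫ t in A, g (x - t) / t| + |∫ t in A, f (x - t)| := abs_add_le _ _
        _ ≤ |∫ t in A, g (x - t) / t| + If := by linarith
    have t1 : Tendsto (fun ε : ℝ => |x * ∫ t in {t : ℝ | ε < |t|}, f (x - t) / t|)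
        (nhdsWithin (0:ℝ) (Ioi 0)) (nhds (|x * Lf x|)) :=
      ((hLf1 x).const_mul x).abs
    have t2 : Tendsto (fun ε : ℝ => |∫ t in {t : ℝ | ε < |t|}, g (x - t) / t| + If)
        (nhdsWithin (0:ℝ) (Ioi 0)) (nhds (|Lg x| + If)) :=
      (hLg1 x).abs.add tendsto_const_nhds
    exact le_of_tendsto_of_tendsto t1 t2 hident
  refine ⟨fun x => (1 / π) * Lf x, fun x => (hLf1 x).const_mul (1 / π), ?_⟩
  have hπ : (0:ℝ) < π := Real.pi_pos
  refine ⟨(2 * M + 2 * If + 2 * M' + Ig) / π + 1, ?_, ?_⟩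
  · have : 0 ≤ (2 * M + 2 * If + 2 * M' + Ig) / π := div_nonneg (by linarith) hπ.le
    linarith
  · intro x
    have h1 : |Lf x| ≤ 2 * M + If := hLf2 x
    have h2 : |x * Lf x| ≤ |Lg x| + If := hxL x
    have h3 : |Lg x| ≤ 2 * M' + Ig := hLg2 x
    rw [abs_mul] at h2
    rw [le_div_iff₀ (by positivity : (0:ℝ) < 1 + |x|), abs_mul,
      abs_of_pos (by positivity : (0:ℝ) < 1 / π)]
    have key : |Lf x| + |x| * |Lf x| ≤ 2 * M + 2 * If + 2 * M' + Ig := by linarith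
    calc 1 / π * |Lf x| * (1 + |x|) = (1 / π) * (|Lf x| + |x| * |Lf x|) := by ring
      _ ≤ (1 / π) * (2 * M + 2 * If + 2 * M' + Ig) :=
          mul_le_mul_of_nonneg_left key (by positivity)
      _ = (2 * M + 2 * If + 2 * M' + Ig) / π := by ring
      _ ≤ (2 * M + 2 * If + 2 * M' + Ig) / π + 1 := by linarith
end

section
/- Let f : ℝ → ℝ be continuously differentiable with compact support. Then Hf(x) exists for every x and |Hf(x)| ≤ C/(1+|x|) for some constant C depending on f. -/
open MeasureTheory Filter Real Set

noncomputable def hilbF (f : ℝ → ℝ) (x t : ℝ) : ℝ := (f (x - t) - f (x + t)) / t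

lemma hilb_int_sub {f : ℝ → ℝ} (hfi : Integrable f volume) (x : ℝ) :
    Integrable (fun t => f (x - t)) volume := by
  simpa [sub_eq_add_neg] using (hfi.comp_add_left x).comp_neg

lemma hilb_int_add {f : ℝ → ℝ} (hfi : Integrable f volume) (x : ℝ) :
    Integrable (fun t => f (x + t)) volume :=
  hfi.comp_add_left x

lemma hilb_intabs_sub (f : ℝ → ℝ) (hfi : Integrable f volume) (x : ℝ) :
    (∫ t, |f (x - t)|) = ∫ t, |f t| := by
  have h1 : (∫ t, |f (x - t)|) = ∫ t, |f (x + t)| := by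
    rw [← integral_neg_eq_self (fun t => |f (x + t)|) volume]
    simp only [sub_eq_add_neg]
  rw [h1]
  exact integral_add_left_eq_self (fun t => |f t|) x

lemma hilb_intabs_add (f : ℝ → ℝ) (hfi : Integrable f volume) (x : ℝ) :
    (∫ t, |f (x + t)|) = ∫ t, |f t| :=
  integral_add_left_eq_self (fun t => |f t|) x

lemma hilbF_meas (f : ℝ → ℝ) (hfc : Continuous f) (x : ℝ) :
    AEStronglyMeasurable (hilbF f x) volume := by
  unfold hilbF
  exact ((((hfc.comp (continuous_const.sub continuous_id)).sub
      (hfc.comp (continuous_const.add continuous_id))).measurable).div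
      measurable_id).aestronglyMeasurable

lemma hilbF_bound1 {f : ℝ → ℝ} {L : ℝ} (hlip : ∀ a b : ℝ, |f b - f a| ≤ L * |b - a|)
    (x : ℝ) {t : ℝ} (ht : 0 < t) : |hilbF f x t| ≤ 2 * L := by
  have h := hlip (x + t) (x - t)
  have habs : |x - t - (x + t)| = 2 * t := by
    rw [show x - t - (x + t) = -(2*t) by ring, abs_neg,
      abs_of_pos (show (0:ℝ) < 2*t by linarith)]
  rw [habs] at h
  rw [hilbF, abs_div, abs_of_pos ht, div_le_iff₀ ht]
  linarith

lemma hilbF_bound2 (f : ℝ → ℝ) (x : ℝ) {s t : ℝ} (hs : 0 < s) (hst : s < t) :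
    |hilbF f x t| ≤ (|f (x - t)| + |f (x + t)|) * s⁻¹ := by
  have ht : 0 < t := hs.trans hst
  rw [hilbF, abs_div, abs_of_pos ht, div_le_iff₀ ht]
  have h3 : (1:ℝ) ≤ s⁻¹ * t := by
    rw [inv_mul_eq_div, le_div_iff₀ hs]; linarith
  calc |f (x - t) - f (x + t)| ≤ |f (x - t)| + |f (x + t)| := abs_sub _ _
    _ = (|f (x - t)| + |f (x + t)|) * 1 := (mul_one _).symm
    _ ≤ (|f (x - t)| + |f (x + t)|) * (s⁻¹ * t) :=
        mul_le_mul_of_nonneg_left h3 (by positivity)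
    _ = (|f (x - t)| + |f (x + t)|) * s⁻¹ * t := by ring

lemma hilbF_intIoc {f : ℝ → ℝ} {L : ℝ} (hfc : Continuous f)
    (hlip : ∀ a b : ℝ, |f b - f a| ≤ L * |b - a|) (x b : ℝ) :
    IntegrableOn (hilbF f x) (Ioc 0 b) volume := by
  apply Integrable.mono' (integrable_const (2 * L)) ((hilbF_meas f hfc x).restrict)
  rw [ae_restrict_iff' measurableSet_Ioc]
  exact Eventually.of_forall fun t ht => by
    simpa [Real.norm_eq_abs] using hilbF_bound1 hlip x ht.1

lemma hilbF_intIoi {f : ℝ → ℝ} (hfc : Continuous f) (hfi : Integrable f volume) (x : ℝ)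
    {s : ℝ} (hs : 0 < s) : IntegrableOn (hilbF f x) (Ioi s) volume := by
  have hint : Integrable (fun t => (|f (x - t)| + |f (x + t)|) * s⁻¹) volume :=
    (((hilb_int_sub hfi x).abs.add (hilb_int_add hfi x).abs).mul_const _)
  apply Integrable.mono' hint.integrableOn ((hilbF_meas f hfc x).restrict)
  rw [ae_restrict_iff' measurableSet_Ioi]
  exact Eventually.of_forall fun t ht => by
    simpa [Real.norm_eq_abs] using hilbF_bound2 f x hs ht

lemma hilbF_intIoi0 {f : ℝ → ℝ} {L : ℝ} (hfc : Continuous f) (hfi : Integrable f volume)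
    (hlip : ∀ a b : ℝ, |f b - f a| ≤ L * |b - a|) (x : ℝ) :
    IntegrableOn (hilbF f x) (Ioi 0) volume := by
  rw [← Ioc_union_Ioi_eq_Ioi (zero_le_one (α := ℝ))]
  exact (hilbF_intIoc hfc hlip x 1).union (hilbF_intIoi hfc hfi x one_pos)

lemma hilbF_tail {f : ℝ → ℝ} (hfc : Continuous f) (hfi : Integrable f volume) (x : ℝ)
    {s : ℝ} (hs : 0 < s) :
    |∫ t in Ioi s, hilbF f x t| ≤ 2 * (∫ t, |f t|) / s := by
  have hsum : Integrable (fun t => |f (x - t)| + |f (x + t)|) volume :=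
    (hilb_int_sub hfi x).abs.add (hilb_int_add hfi x).abs
  have h1 : ‖∫ t in Ioi s, hilbF f x t‖ ≤ ∫ t in Ioi s, (|f (x - t)| + |f (x + t)|) * s⁻¹ := by
    apply norm_integral_le_of_norm_le (hsum.mul_const _).integrableOn
    rw [ae_restrict_iff' measurableSet_Ioi]
    exact Eventually.of_forall fun t ht => by
      simpa [Real.norm_eq_abs] using hilbF_bound2 f x hs ht
  have h2 : (∫ t in Ioi s, (|f (x - t)| + |f (x + t)|) * s⁻¹)
      = (∫ t in Ioi s, (|f (x - t)| + |f (x + t)|)) * s⁻¹ := integral_mul_const _ _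
  have h3 : (∫ t in Ioi s, (|f (x - t)| + |f (x + t)|)) ≤ 2 * ∫ t, |f t| := by
    have h4 : (∫ t in Ioi s, (|f (x - t)| + |f (x + t)|)) ≤ ∫ t, (|f (x - t)| + |f (x + t)|) :=
      setIntegral_le_integral hsum (Eventually.of_forall fun t => by positivity)
    have h5 : (∫ t, (|f (x - t)| + |f (x + t)|)) = 2 * ∫ t, |f t| := by
      rw [integral_add (hilb_int_sub hfi x).abs (hilb_int_add hfi x).abs,
        hilb_intabs_sub f hfi x, hilb_intabs_add f hfi x]; ring
    linarith
  have hI : 0 ≤ ∫ t, |f t| := integral_nonneg fun t => abs_nonneg _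
  rw [Real.norm_eq_abs] at h1
  calc |∫ t in Ioi s, hilbF f x t| ≤ (∫ t in Ioi s, (|f (x - t)| + |f (x + t)|)) * s⁻¹ := by
        rw [← h2]; exact h1
    _ ≤ (2 * ∫ t, |f t|) * s⁻¹ := mul_le_mul_of_nonneg_right h3 (by positivity)
    _ = 2 * (∫ t, |f t|) / s := by rw [div_eq_mul_inv]

lemma hilb_div_int {g : ℝ → ℝ} (hgc : Continuous g) (hgi : Integrable g volume)
    {ε : ℝ} (hε : 0 < ε) {s : Set ℝ} (hsm : MeasurableSet s)
    (hsub : ∀ t ∈ s, ε ≤ |t|) : IntegrableOn (fun t => g t / t) s volume := by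
  apply Integrable.mono' (hgi.abs.mul_const ε⁻¹).integrableOn
    (((hgc.measurable.div measurable_id).aestronglyMeasurable).restrict)
  rw [ae_restrict_iff' hsm]
  refine Eventually.of_forall fun t ht => ?_
  have h1 : ε ≤ |t| := hsub t ht
  have h2 : (0:ℝ) < |t| := lt_of_lt_of_le hε h1
  rw [Real.norm_eq_abs, Pi.div_apply, abs_div, div_eq_mul_inv]
  apply mul_le_mul_of_nonneg_left _ (abs_nonneg (g t))
  simp only [id_eq]
  exact inv_anti₀ hε h1

lemma hilb_ident {f : ℝ → ℝ} (hfc : Continuous f) (hfi : Integrable f volume)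
    (x ε : ℝ) (hε : 0 < ε) :
    (∫ t in {t : ℝ | ε < |t|}, f (x - t) / t) = ∫ t in Ioi ε, hilbF f x t := by
  have hs1 : Continuous (fun t => f (x - t)) := hfc.comp (continuous_const.sub continuous_id)
  have hs2 : Continuous (fun t => f (x + t)) := hfc.comp (continuous_const.add continuous_id)
  have hint1 : IntegrableOn (fun t => f (x - t) / t) (Ioi ε) volume :=
    hilb_div_int hs1 (hilb_int_sub hfi x) hε measurableSet_Ioi
      (fun t ht => le_trans (le_of_lt ht) (le_abs_self t))
  have hint2 : IntegrableOn (fun t => f (x - t) / t) (Iio (-ε)) volume :=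
    hilb_div_int hs1 (hilb_int_sub hfi x) hε measurableSet_Iio
      (fun t ht => by
        have h : t < -ε := ht
        rw [abs_of_neg (by linarith : t < 0)]; linarith)
  have hint3 : IntegrableOn (fun t => f (x + t) / t) (Ioi ε) volume :=
    hilb_div_int hs2 (hilb_int_add hfi x) hε measurableSet_Ioi
      (fun t ht => le_trans (le_of_lt ht) (le_abs_self t))
  have hset : {t : ℝ | ε < |t|} = Iio (-ε) ∪ Ioi ε := by
    ext t
    simp only [mem_setOf_eq, mem_union, mem_Iio, mem_Ioi, lt_abs]
    constructor
    · rintro (h | h)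
      exacts [Or.inr h, Or.inl (by linarith)]
    · rintro (h | h)
      exacts [Or.inr (by linarith), Or.inl h]
  rw [hset, setIntegral_union
    ((Iio_disjoint_Ici (le_refl ε)).mono (Iio_subset_Iio (by linarith)) Ioi_subset_Ici_self)
    measurableSet_Ioi hint2 hint1]
  have h2 : (∫ t in Iio (-ε), f (x - t) / t) = ∫ t in Ioi ε, -(f (x + t) / t) := by
    rw [← integral_Iic_eq_integral_Iio]
    simpa only [neg_neg, sub_neg_eq_add, div_neg] using
      integral_comp_neg_Iic (-ε) (fun t => f (x - (-t)) / (-t))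
  rw [h2, integral_neg, neg_add_eq_sub, ← integral_sub hint1 hint3]
  congr 1; funext t; rw [hilbF, sub_div]

lemma hilb_tendsto {f : ℝ → ℝ} {L : ℝ} (hfc : Continuous f) (hfi : Integrable f volume)
    (hlip : ∀ a b : ℝ, |f b - f a| ≤ L * |b - a|) (x : ℝ) :
    Tendsto (fun ε : ℝ => ∫ t in Ioi ε, hilbF f x t) (nhdsWithin 0 (Ioi 0))
      (nhds (∫ t in Ioi (0:ℝ), hilbF f x t)) := by
  have h0 : Tendsto (fun ε : ℝ => (∫ t in Ioi (0:ℝ), hilbF f x t) - ∫ t in Ioi ε, hilbF f x t)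
      (nhdsWithin 0 (Ioi 0)) (nhds 0) := by
    apply squeeze_zero_norm' (a := fun ε : ℝ => 2 * L * ε)
    · filter_upwards [Ioc_mem_nhdsGT one_pos] with ε hε
      have hsplit : (∫ t in Ioi (0:ℝ), hilbF f x t)
          = (∫ t in Ioc 0 ε, hilbF f x t) + ∫ t in Ioi ε, hilbF f x t := by
        rw [← setIntegral_union (Ioc_disjoint_Ioi le_rfl) measurableSet_Ioi
          (hilbF_intIoc hfc hlip x ε) (hilbF_intIoi hfc hfi x hε.1),
          Ioc_union_Ioi_eq_Ioi hε.1.le]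
      rw [hsplit, add_sub_cancel_right]
      have hb : ‖∫ t in Ioc (0:ℝ) ε, hilbF f x t‖ ≤ (2*L) * (volume (Ioc (0:ℝ) ε)).toReal :=
        norm_setIntegral_le_of_norm_le_const measure_Ioc_lt_top
          (fun t ht => by simpa [Real.norm_eq_abs] using hilbF_bound1 hlip x ht.1)
      simpa [Real.volume_Ioc, ENNReal.toReal_ofReal hε.1.le] using hb
    · have h : Tendsto (fun ε : ℝ => 2 * L * ε) (nhds 0) (nhds (2 * L * 0)) :=
        (continuous_const.mul continuous_id).tendsto 0
      simpa using h.mono_left nhdsWithin_le_nhds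
  have h := (tendsto_const_nhds (x := ∫ t in Ioi (0:ℝ), hilbF f x t)
    (f := nhdsWithin (0:ℝ) (Ioi 0))).sub h0
  simpa [sub_sub_cancel] using h

/-- If `f : ℝ → ℝ` is continuously differentiable with compact support,
then the principal-value Hilbert transform `Hf(x)` exists for every `x`, and
`|Hf(x)| ≤ C/(1+|x|)` for some constant `C` depending on `f`. -/
theorem hilbert_transform_decay_of_compact_support (f : ℝ → ℝ)
    (hf : ContDiff ℝ 1 f) (hsupp : HasCompactSupport f) :
    ∃ Hf : ℝ → ℝ,
      (∀ x : ℝ, Tendsto (fun ε : ℝ => (1 / π) * ∫ t in {t : ℝ | ε < |t|}, f (x - t) / t)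
        (nhdsWithin 0 (Ioi 0)) (nhds (Hf x))) ∧
      ∃ C : ℝ, 0 < C ∧ ∀ x : ℝ, |Hf x| ≤ C / (1 + |x|) := by
  have hfc : Continuous f := hf.continuous
  have hfi : Integrable f volume := hfc.integrable_of_hasCompactSupport hsupp
  obtain ⟨L₀, hL₀⟩ := (hsupp.deriv).exists_bound_of_continuous (hf.continuous_deriv le_rfl)
  set L := max L₀ 0 with hLdef
  have hL0 : 0 ≤ L := le_max_right _ _
  have hlip : ∀ a b : ℝ, |f b - f a| ≤ L * |b - a| := by
    intro a b
    have h := Convex.norm_image_sub_le_of_norm_deriv_le (f := f) (s := univ) (C := L)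
      (fun y _ => (hf.differentiable one_ne_zero).differentiableAt)
      (fun y _ => (hL₀ y).trans (le_max_left _ _)) convex_univ (mem_univ a) (mem_univ b)
    simpa [Real.norm_eq_abs] using h
  have hI0 : 0 ≤ ∫ t, |f t| := integral_nonneg fun t => abs_nonneg _
  obtain ⟨R₀, hR₀⟩ := hsupp.isBounded.subset_closedBall 0
  set R := max R₀ 1 with hRdef
  have hR1 : (1:ℝ) ≤ R := le_max_right _ _
  have hfR : ∀ y : ℝ, R < |y| → f y = 0 := by
    intro y hy
    by_contra h
    have hy' : y ∈ tsupport f := subset_tsupport f h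
    have h2 := hR₀ hy'
    rw [Metric.mem_closedBall, Real.dist_eq, sub_zero] at h2
    have h3 : |y| ≤ R := h2.trans (le_max_left _ _)
    linarith
  refine ⟨fun x => (1 / π) * ∫ t in Ioi (0:ℝ), hilbF f x t, ?_, ?_⟩
  · intro x
    apply Tendsto.congr' ?_ ((hilb_tendsto hfc hfi hlip x).const_mul (1/π))
    filter_upwards [self_mem_nhdsWithin] with ε hε
    rw [hilb_ident hfc hfi x ε (mem_Ioi.mp hε)]
  · have hglob : ∀ x : ℝ, |∫ t in Ioi (0:ℝ), hilbF f x t| ≤ 2*L + 2*(∫ t, |f t|) := by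
      intro x
      have hsplit : (∫ t in Ioi (0:ℝ), hilbF f x t)
          = (∫ t in Ioc (0:ℝ) 1, hilbF f x t) + ∫ t in Ioi (1:ℝ), hilbF f x t := by
        rw [← setIntegral_union (Ioc_disjoint_Ioi le_rfl) measurableSet_Ioi
          (hilbF_intIoc hfc hlip x 1) (hilbF_intIoi hfc hfi x one_pos),
          Ioc_union_Ioi_eq_Ioi zero_le_one]
      have h1 : |∫ t in Ioc (0:ℝ) 1, hilbF f x t| ≤ 2*L := by
        have hb := norm_setIntegral_le_of_norm_le_const (μ := volume) (s := Ioc (0:ℝ) 1) (f := hilbF f x)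
          measure_Ioc_lt_top
          (fun t ht => by simpa [Real.norm_eq_abs] using hilbF_bound1 hlip x ht.1)
        simpa [Real.volume_real_Ioc] using hb
      have h2 : |∫ t in Ioi (1:ℝ), hilbF f x t| ≤ 2*(∫ t, |f t|) := by
        simpa using hilbF_tail hfc hfi x one_pos
      rw [hsplit]
      calc |(∫ t in Ioc (0:ℝ) 1, hilbF f x t) + ∫ t in Ioi (1:ℝ), hilbF f x t|
          ≤ |∫ t in Ioc (0:ℝ) 1, hilbF f x t| + |∫ t in Ioi (1:ℝ), hilbF f x t| := abs_add_le _ _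
        _ ≤ 2*L + 2*(∫ t, |f t|) := by linarith
    have hfar : ∀ x : ℝ, 2*R < |x| →
        |∫ t in Ioi (0:ℝ), hilbF f x t| ≤ 2*(∫ t, |f t|)/(|x|/2) := by
      intro x hx
      have hs : (0:ℝ) < |x|/2 := by linarith
      have hzero : ∀ t ∈ Ioc (0:ℝ) (|x|/2), hilbF f x t = 0 := by
        intro t ht
        have h1 : f (x - t) = 0 := by
          apply hfR
          have ha := abs_sub_abs_le_abs_sub x t
          have htt : |t| = t := abs_of_pos ht.1
          linarith [ht.2]
        have h2 : f (x + t) = 0 := by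
          apply hfR
          have ha := abs_sub_abs_le_abs_sub x (-t)
          rw [abs_neg, sub_neg_eq_add] at ha
          have htt : |t| = t := abs_of_pos ht.1
          linarith [ht.2]
        simp [hilbF, h1, h2]
      have hsplit : (∫ t in Ioi (0:ℝ), hilbF f x t) = ∫ t in Ioi (|x|/2), hilbF f x t := by
        rw [← Ioc_union_Ioi_eq_Ioi hs.le, setIntegral_union (Ioc_disjoint_Ioi le_rfl)
          measurableSet_Ioi (hilbF_intIoc hfc hlip x _) (hilbF_intIoi hfc hfi x hs),
          setIntegral_eq_zero_of_forall_eq_zero hzero, zero_add]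
      rw [hsplit]
      exact hilbF_tail hfc hfi x hs
    set I := ∫ t, |f t| with hIdef
    refine ⟨(2*L + 2*I)*(1+2*R)/π + 8*I/π + 1, ?_, ?_⟩
    · have h1 : (0:ℝ) ≤ (2*L + 2*I)*(1+2*R)/π :=
        div_nonneg (mul_nonneg (by linarith) (by linarith)) Real.pi_pos.le
      have h2 : (0:ℝ) ≤ 8*I/π := div_nonneg (by linarith) Real.pi_pos.le
      linarith
    · intro x
      have h1x : (0:ℝ) < 1 + |x| := by positivity
      show |(1/π) * ∫ t in Ioi (0:ℝ), hilbF f x t| ≤ _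
      rw [abs_mul, abs_of_pos (show (0:ℝ) < 1/π by positivity), one_div, inv_mul_eq_div,
        div_le_div_iff₀ Real.pi_pos h1x]
      have hCpi : ((2*L + 2*I)*(1+2*R)/π + 8*I/π + 1) * π
          = (2*L+2*I)*(1+2*R) + 8*I + π := by
        field_simp
      rw [hCpi]
      have hA : (0:ℝ) ≤ (2*L+2*I)*(1+2*R) := mul_nonneg (by linarith) (by linarith)
      rcases le_or_gt |x| (2*R) with hcase | hcase
      · have hJ := hglob x
        have hmul := mul_le_mul hJ (show 1 + |x| ≤ 1 + 2*R by linarith)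
          (by positivity) (by linarith : (0:ℝ) ≤ 2*L + 2*I)
        linarith [Real.pi_pos]
      · have hJ := hfar x hcase
        have hs1 : (1:ℝ) ≤ |x|/2 := by linarith
        have hxne : |x| ≠ 0 := by intro h; rw [h] at hcase; linarith
        have heq : 2*I/(|x|/2) * (1 + |x|) = 2*I/(|x|/2) + 4*I := by
          field_simp
          ring
        have hdiv : 2*I/(|x|/2) ≤ 2*I := div_le_self (by linarith) hs1
        have hmul := mul_le_mul_of_nonneg_right hJ h1x.le
        rw [heq] at hmul
        have habs := abs_nonneg (∫ t in Ioi (0:ℝ), hilbF f x t)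
        nlinarith [Real.pi_pos]
end

section
/- Let φ ∈ L²(ℝ) have Fourier transform supported in (−ω₀, ω₀) for some ω₀ > 0. Then H[φ(x) cos(ω₀ x)] = φ(x) sin(ω₀ x), where H is the Hilbert transform defined in the Fourier domain by multiplication with −i sgn(ω). -/
open MeasureTheory Filter Real Set Complex

/-- **Bedrosian identity.** If `φ ∈ L²(ℝ)` (taken integrable so that
its Fourier transform `φ̂(ω) = ∫ φ(x)e^{−iωx} dx` is defined pointwise) is bandlimited
to `(−ω₀, ω₀)`, then `H[φ(x)cos(ω₀x)] = φ(x)sin(ω₀x)`, where `H` is defined in the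
Fourier domain by multiplication with `−i sgn(ω)`; equivalently, the Fourier transform
of `φ(x)sin(ω₀x)` equals `−i sgn(ω)` times that of `φ(x)cos(ω₀x)`. -/
theorem bedrosian_identity (φ : ℝ → ℂ) (ω₀ : ℝ) (hω₀ : 0 < ω₀)
    (hφ2 : MemLp φ 2 (volume : Measure ℝ)) (hφ1 : Integrable φ)
    (hband : ∀ ω : ℝ, ω ∉ Ioo (-ω₀) ω₀ →
      ∫ x : ℝ, φ x * Complex.exp (-Complex.I * ω * x) = 0) :
    ∀ ω : ℝ,
      ∫ x : ℝ, (φ x * (Real.sin (ω₀ * x) : ℂ)) * Complex.exp (-Complex.I * ω * x) =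
        -Complex.I * (Real.sign ω : ℂ) *
          ∫ x : ℝ, (φ x * (Real.cos (ω₀ * x) : ℂ)) * Complex.exp (-Complex.I * ω * x) := by
  intro ω
  have hInt : ∀ a : ℝ, Integrable (fun x : ℝ => φ x * Complex.exp (-Complex.I * a * x)) := by
    intro a
    refine (hφ1.norm.mono' ?_ ?_)
    · exact hφ1.aestronglyMeasurable.mul
        ((Complex.continuous_exp.comp (by continuity)).aestronglyMeasurable)
    · refine Filter.Eventually.of_forall fun x => ?_
      simp [Complex.norm_exp]
  set G : ℝ → ℂ := fun a => ∫ x : ℝ, φ x * Complex.exp (-Complex.I * a * x) with hG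
  have e1 : ∀ x : ℝ, Complex.exp (Complex.I * ω₀ * x) * Complex.exp (-Complex.I * ω * x)
      = Complex.exp (-Complex.I * ((ω - ω₀ : ℝ) : ℂ) * x) := by
    intro x; rw [← Complex.exp_add]; congr 1; push_cast; ring
  have e2 : ∀ x : ℝ, Complex.exp (-Complex.I * ω₀ * x) * Complex.exp (-Complex.I * ω * x)
      = Complex.exp (-Complex.I * ((ω + ω₀ : ℝ) : ℂ) * x) := by
    intro x; rw [← Complex.exp_add]; congr 1; push_cast; ring
  have hsinx : ∀ x : ℝ, ((Real.sin (ω₀ * x) : ℝ) : ℂ)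
      = (Complex.exp (-Complex.I * ω₀ * x) - Complex.exp (Complex.I * ω₀ * x)) * Complex.I / 2 := by
    intro x
    rw [Complex.ofReal_sin, Complex.sin]
    rw [show (-(((ω₀ * x : ℝ) : ℂ)) * Complex.I) = -Complex.I * ω₀ * x by push_cast; ring,
      show (((ω₀ * x : ℝ) : ℂ) * Complex.I) = Complex.I * ω₀ * x by push_cast; ring]
  have hcosx : ∀ x : ℝ, ((Real.cos (ω₀ * x) : ℝ) : ℂ)
      = (Complex.exp (Complex.I * ω₀ * x) + Complex.exp (-Complex.I * ω₀ * x)) / 2 := by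
    intro x
    rw [Complex.ofReal_cos, Complex.cos]
    rw [show (-(((ω₀ * x : ℝ) : ℂ)) * Complex.I) = -Complex.I * ω₀ * x by push_cast; ring,
      show (((ω₀ * x : ℝ) : ℂ) * Complex.I) = Complex.I * ω₀ * x by push_cast; ring]
  have hsinI : (∫ x : ℝ, (φ x * (Real.sin (ω₀ * x) : ℂ)) * Complex.exp (-Complex.I * ω * x))
      = (Complex.I / 2) * G (ω + ω₀) - (Complex.I / 2) * G (ω - ω₀) := by
    have : (fun x : ℝ => (φ x * (Real.sin (ω₀ * x) : ℂ)) * Complex.exp (-Complex.I * ω * x))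
        = fun x : ℝ => (Complex.I / 2) * (φ x * Complex.exp (-Complex.I * ((ω + ω₀ : ℝ) : ℂ) * x))
            - (Complex.I / 2) * (φ x * Complex.exp (-Complex.I * ((ω - ω₀ : ℝ) : ℂ) * x)) := by
      funext x
      rw [hsinx x, ← e1 x, ← e2 x]
      ring
    rw [this, integral_sub ((hInt (ω + ω₀)).const_mul _) ((hInt (ω - ω₀)).const_mul _),
      MeasureTheory.integral_const_mul, MeasureTheory.integral_const_mul]
  have hcosI : (∫ x : ℝ, (φ x * (Real.cos (ω₀ * x) : ℂ)) * Complex.exp (-Complex.I * ω * x))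
      = (1 / 2 : ℂ) * G (ω - ω₀) + (1 / 2 : ℂ) * G (ω + ω₀) := by
    have : (fun x : ℝ => (φ x * (Real.cos (ω₀ * x) : ℂ)) * Complex.exp (-Complex.I * ω * x))
        = fun x : ℝ => (1 / 2 : ℂ) * (φ x * Complex.exp (-Complex.I * ((ω - ω₀ : ℝ) : ℂ) * x))
            + (1 / 2 : ℂ) * (φ x * Complex.exp (-Complex.I * ((ω + ω₀ : ℝ) : ℂ) * x)) := by
      funext x
      rw [hcosx x, ← e1 x, ← e2 x]
      ring
    rw [this, integral_add ((hInt (ω - ω₀)).const_mul _) ((hInt (ω + ω₀)).const_mul _),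
      MeasureTheory.integral_const_mul, MeasureTheory.integral_const_mul]
  rw [hsinI, hcosI]
  rcases lt_trichotomy ω 0 with h | h | h
  · have h1 : G (ω - ω₀) = 0 := hband _ (by simp [mem_Ioo]; intro h'; linarith)
    rw [Real.sign_of_neg h, h1]
    push_cast; ring
  · subst h
    have h1 : G (0 - ω₀) = 0 := hband _ (by simp [mem_Ioo])
    have h2 : G (0 + ω₀) = 0 := hband _ (by simp [mem_Ioo])
    rw [h1, h2, Real.sign_zero]
    push_cast; ring
  · have h2 : G (ω + ω₀) = 0 := hband _ (by simp [mem_Ioo]; intro h'; linarith)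
    rw [Real.sign_of_pos h, h2]
    push_cast; ring
end
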